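/- Let x, y, z > 0 and set p0 = 0, p1 = x, p2 = x + y, p3 = x + y + z. Let h be the unique point of the open upper half-plane lying on both the circle with diameter [p0,p2] and the circle with diameter [p1,p3]. Then |h - p1|^2 / Im h = (y+z)*sqrt(x*y/(z*(x+y+z))). Equivalently, the Euclidean circle tangent to the real axis at the point p1 and passing through h has Euclidean diameter d(x,y,z) := (y+z)*sqrt(x*y/(z*(x+y+z))). -/

import Mathlib

/-- `z` lies on the circle in the plane with diameter the segment `[p, q]` of the real
axis, i.e. the circle with center `(p+q)/2` and radius `(q-p)/2`. -/
def onDiamCircle (p q : ℝ) (z : ℂ) : Prop :=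
  ‖z - (((p + q) / 2 : ℝ) : ℂ)‖ = (q - p) / 2

/-- **Diameter of the horocycle at `p₁` through the crossing point.**
Let `x, y, z > 0`, and set `p₀ = 0`, `p₁ = x`, `p₂ = x + y`, `p₃ = x + y + z`.
If `h` is a point of the open upper half-plane lying on both the circle with diameter
`[p₀, p₂]` and the circle with diameter `[p₁, p₃]` (there is a unique such point), then
`|h - p₁|² / Im h = (y+z) * √(x*y / (z*(x+y+z)))`; i.e. the Euclidean circle tangent to
the real axis at `p₁` passing through `h` has Euclidean diameter
`d(x,y,z) = (y+z)*√(x*y/(z*(x+y+z)))`. -/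
theorem horocycle_diameter_at_crossing (x y z : ℝ) (hx : 0 < x) (hy : 0 < y) (hz : 0 < z)
    (h : ℂ) (him : 0 < h.im)
    (h1 : onDiamCircle 0 (x + y) h) (h2 : onDiamCircle x (x + y + z) h) :
    ‖h - (x : ℂ)‖ ^ 2 / h.im =
      (y + z) * Real.sqrt (x * y / (z * (x + y + z))) := by
  unfold onDiamCircle at h1 h2
  have hxz : 0 < x + z := by linarith
  have hs : 0 < x + y + z := by linarith
  set a := h.re with ha'
  set b := h.im with hb'
  have hb0 : 0 < b := him
  -- squared versions of circle equations
  have e1 : a ^ 2 + b ^ 2 = (x + y) * a := by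
    have h0 : ‖h - (((0 + (x + y)) / 2 : ℝ) : ℂ)‖ ^ 2 = ((x + y - 0) / 2) ^ 2 := by
      rw [h1]
    rw [Complex.sq_norm, Complex.normSq_apply] at h0
    simp only [Complex.sub_re, Complex.sub_im, Complex.ofReal_re, Complex.ofReal_im,
      ← ha', ← hb'] at h0
    nlinarith [h0]
  have e2 : (a - (2 * x + y + z) / 2) ^ 2 + b ^ 2 = ((y + z) / 2) ^ 2 := by
    have h0 : ‖h - (((x + (x + y + z)) / 2 : ℝ) : ℂ)‖ ^ 2
        = ((x + y + z - x) / 2) ^ 2 := by rw [h2]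
    rw [Complex.sq_norm, Complex.normSq_apply] at h0
    simp only [Complex.sub_re, Complex.sub_im, Complex.ofReal_re, Complex.ofReal_im,
      ← ha', ← hb'] at h0
    nlinarith [h0]
  have haa : a * (x + z) = x * (x + y + z) := by linear_combination e1 - e2
  have hb2 : b ^ 2 * (x + z) ^ 2 = x * y * z * (x + y + z) := by
    linear_combination (x + z) ^ 2 * e1 + (y * z - (x + z) * a) * haa
  have hN : ‖h - (x : ℂ)‖ ^ 2 = x * y * (y + z) / (x + z) := by
    rw [Complex.sq_norm, Complex.normSq_apply]
    simp only [Complex.sub_re, Complex.sub_im, Complex.ofReal_re, Complex.ofReal_im,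
      ← ha', ← hb']
    field_simp
    linear_combination (x + z) * e1 + (y - x) * haa
  rw [hN]
  have hL : 0 ≤ x * y * (y + z) / (x + z) / b := by positivity
  have hR : 0 ≤ (y + z) * Real.sqrt (x * y / (z * (x + y + z))) := by positivity
  have key : (x * y * (y + z) / (x + z) / b) ^ 2
      = ((y + z) * Real.sqrt (x * y / (z * (x + y + z)))) ^ 2 := by
    have hbval : b ^ 2 = x * y * z * (x + y + z) / (x + z) ^ 2 := by
      field_simp
      linear_combination hb2
    rw [mul_pow, Real.sq_sqrt (by positivity), div_pow, div_pow, hbval]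
    field_simp
  calc x * y * (y + z) / (x + z) / b
      = Real.sqrt ((x * y * (y + z) / (x + z) / b) ^ 2) := (Real.sqrt_sq hL).symm
    _ = Real.sqrt (((y + z) * Real.sqrt (x * y / (z * (x + y + z)))) ^ 2) := by rw [key]
    _ = (y + z) * Real.sqrt (x * y / (z * (x + y + z))) := Real.sqrt_sq hR
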